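/- For n = 2 and the dihedral group I₂(m) acting on ℝ² with basic invariants of degrees 2 and m, the image of the Chevalley map P : ℝ² → ℝ² intersected with {p : p₁ ≤ a²} is Whitney 1-regular for every a > 0. Concretely, for the group I₂(2) = ℤ/2 × ℤ/2 with P(x, y) = (x² + y², x²y²) (adjusted basic invariants), the image set {(u, v) : u ≥ 0, 0 ≤ v ≤ u²/4, u ≤ a²} is Whitney 1-regular. -/

import Mathlib

open scoped ENNReal NNReal


/-- clamp to `[0,1]` -/
noncomputable def clmp (t : ℝ) : ℝ := max (min t 1) 0

lemma clmp_lip (s t : ℝ) : |clmp s - clmp t| ≤ |s - t| := by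
  unfold clmp
  refine (abs_max_sub_max_le_abs _ _ _).trans ?_
  simpa using abs_min_sub_min_le_max s 1 t 1

lemma clmp_nonneg (t : ℝ) : 0 ≤ clmp t := le_max_right _ _
lemma clmp_le_one (t : ℝ) : clmp t ≤ 1 := max_le (min_le_right _ _) zero_le_one
lemma clmp_of_nonpos {t : ℝ} (h : t ≤ 0) : clmp t = 0 := by
  unfold clmp
  rw [max_eq_right]
  exact (min_le_left _ _).trans h
lemma clmp_of_one_le {t : ℝ} (h : 1 ≤ t) : clmp t = 1 := by
  unfold clmp
  rw [min_eq_right h, max_eq_left zero_le_one]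

/-- first coordinate of the Manhattan path -/
noncomputable def pathU (u₁ u₂ t : ℝ) : ℝ := u₁ + (u₂ - u₁) * clmp (3*t - 1)

/-- second coordinate of the Manhattan path -/
noncomputable def pathV (v₁ v₂ t : ℝ) : ℝ :=
  v₁ + (min v₁ v₂ - v₁) * clmp (3*t) + (v₂ - min v₁ v₂) * clmp (3*t - 2)

lemma pathU_lip (u₁ u₂ s t : ℝ) :
    |pathU u₁ u₂ s - pathU u₁ u₂ t| ≤ |u₂ - u₁| * (3 * |s - t|) := by
  have e : pathU u₁ u₂ s - pathU u₁ u₂ t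
      = (u₂ - u₁) * (clmp (3*s - 1) - clmp (3*t - 1)) := by unfold pathU; ring
  rw [e, abs_mul]
  have h := clmp_lip (3*s - 1) (3*t - 1)
  have h2 : |3*s - 1 - (3*t - 1)| = 3 * |s - t| := by
    rw [show 3*s - 1 - (3*t - 1) = 3*(s - t) by ring, abs_mul]; norm_num
  exact mul_le_mul_of_nonneg_left (h.trans h2.le) (abs_nonneg _)

lemma pathV_lip (v₁ v₂ s t : ℝ) :
    |pathV v₁ v₂ s - pathV v₁ v₂ t| ≤ |v₂ - v₁| * (3 * |s - t|) := by
  set m := min v₁ v₂ with hm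
  have e : pathV v₁ v₂ s - pathV v₁ v₂ t
      = (m - v₁) * (clmp (3*s) - clmp (3*t))
        + (v₂ - m) * (clmp (3*s - 2) - clmp (3*t - 2)) := by unfold pathV; ring
  have h1 : |clmp (3*s) - clmp (3*t)| ≤ 3 * |s - t| := by
    refine (clmp_lip _ _).trans ?_
    rw [show 3*s - 3*t = 3*(s - t) by ring, abs_mul]; norm_num
  have h2 : |clmp (3*s - 2) - clmp (3*t - 2)| ≤ 3 * |s - t| := by
    refine (clmp_lip _ _).trans ?_
    rw [show 3*s - 2 - (3*t - 2) = 3*(s - t) by ring, abs_mul]; norm_num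
  have hsum : |m - v₁| + |v₂ - m| = |v₂ - v₁| := by
    rcases le_total v₁ v₂ with h | h
    · rw [hm, min_eq_left h]; simp [abs_of_nonneg (sub_nonneg.2 h)]
    · rw [hm, min_eq_right h]
      have h' : |v₂ - v₁| = v₁ - v₂ := by rw [abs_of_nonpos (by linarith)]; ring
      simp [h']
  rw [e]
  calc |(m - v₁) * (clmp (3*s) - clmp (3*t))
        + (v₂ - m) * (clmp (3*s - 2) - clmp (3*t - 2))|
      ≤ |(m - v₁) * (clmp (3*s) - clmp (3*t))|
        + |(v₂ - m) * (clmp (3*s - 2) - clmp (3*t - 2))| := abs_add_le _ _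
    _ ≤ |m - v₁| * (3 * |s - t|) + |v₂ - m| * (3 * |s - t|) := by
        rw [abs_mul, abs_mul]
        gcongr
    _ = |v₂ - v₁| * (3 * |s - t|) := by rw [← hsum]; ring

/-- the path itself -/
noncomputable def pth (x y : EuclideanSpace ℝ (Fin 2)) (t : ℝ) : EuclideanSpace ℝ (Fin 2) :=
  WithLp.toLp 2 ![pathU (x 0) (y 0) t, pathV (x 1) (y 1) t]

lemma pth_apply0 (x y : EuclideanSpace ℝ (Fin 2)) (t : ℝ) :
    pth x y t 0 = pathU (x 0) (y 0) t := rfl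
lemma pth_apply1 (x y : EuclideanSpace ℝ (Fin 2)) (t : ℝ) :
    pth x y t 1 = pathV (x 1) (y 1) t := rfl

lemma sqrt_sq_add_sq_le (p q : ℝ) : Real.sqrt (p^2 + q^2) ≤ |p| + |q| := by
  have h : p^2 + q^2 ≤ (|p| + |q|)^2 := by
    nlinarith [mul_nonneg (abs_nonneg p) (abs_nonneg q), sq_abs p, sq_abs q]
  calc Real.sqrt (p^2 + q^2) ≤ Real.sqrt ((|p| + |q|)^2) := Real.sqrt_le_sqrt h
    _ = |p| + |q| := Real.sqrt_sq (by positivity)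

lemma pth_dist_le (x y : EuclideanSpace ℝ (Fin 2)) (s t : ℝ) :
    dist (pth x y s) (pth x y t)
      ≤ 3 * (|y 0 - x 0| + |y 1 - x 1|) * dist s t := by
  rw [EuclideanSpace.dist_eq, Fin.sum_univ_two, pth_apply0, pth_apply0, pth_apply1, pth_apply1,
    Real.dist_eq, Real.dist_eq, Real.dist_eq]
  calc Real.sqrt (|pathU (x 0) (y 0) s - pathU (x 0) (y 0) t|^2
        + |pathV (x 1) (y 1) s - pathV (x 1) (y 1) t|^2)
      ≤ |pathU (x 0) (y 0) s - pathU (x 0) (y 0) t|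
        + |pathV (x 1) (y 1) s - pathV (x 1) (y 1) t| := by
        have := sqrt_sq_add_sq_le (pathU (x 0) (y 0) s - pathU (x 0) (y 0) t)
          (pathV (x 1) (y 1) s - pathV (x 1) (y 1) t)
        simpa [sq_abs, abs_abs] using this
    _ ≤ |y 0 - x 0| * (3 * |s - t|) + |y 1 - x 1| * (3 * |s - t|) :=
        add_le_add (pathU_lip _ _ _ _) (pathV_lip _ _ _ _)
    _ = 3 * (|y 0 - x 0| + |y 1 - x 1|) * |s - t| := by ring

lemma proj_abs_le_dist (x y : EuclideanSpace ℝ (Fin 2)) (i : Fin 2) :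
    |x i - y i| ≤ dist x y := by
  rw [EuclideanSpace.dist_eq, Fin.sum_univ_two, Real.dist_eq, Real.dist_eq]
  have h0 : (0:ℝ) ≤ |x 0 - y 0|^2 := sq_nonneg _
  have h1 : (0:ℝ) ≤ |x 1 - y 1|^2 := sq_nonneg _
  fin_cases i
  · calc |x 0 - y 0| = Real.sqrt (|x 0 - y 0|^2) := (Real.sqrt_sq (abs_nonneg _)).symm
      _ ≤ _ := Real.sqrt_le_sqrt (by linarith)
  · calc |x 1 - y 1| = Real.sqrt (|x 1 - y 1|^2) := (Real.sqrt_sq (abs_nonneg _)).symm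
      _ ≤ _ := Real.sqrt_le_sqrt (by linarith)

lemma pathU_zero (u₁ u₂ : ℝ) : pathU u₁ u₂ 0 = u₁ := by
  unfold pathU; rw [clmp_of_nonpos (by norm_num)]; ring
lemma pathU_one (u₁ u₂ : ℝ) : pathU u₁ u₂ 1 = u₂ := by
  unfold pathU; rw [clmp_of_one_le (by norm_num)]; ring
lemma pathV_zero (v₁ v₂ : ℝ) : pathV v₁ v₂ 0 = v₁ := by
  unfold pathV
  rw [show (3:ℝ)*0 = 0 by ring, clmp_of_nonpos le_rfl, clmp_of_nonpos (by norm_num)]; ring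
lemma pathV_one (v₁ v₂ : ℝ) : pathV v₁ v₂ 1 = v₂ := by
  unfold pathV
  rw [clmp_of_one_le (by norm_num), clmp_of_one_le (by norm_num)]; ring


/-- A set `K` is Whitney 1-regular if there is `C > 0` such that any two of its
points are joined by a rectifiable path in `K` of length at most `C` times
their distance. -/
def WhitneyOneRegular {E : Type*} [PseudoEMetricSpace E] (K : Set E) : Prop :=
  ∃ C : ℝ, 0 < C ∧ ∀ x ∈ K, ∀ y ∈ K, ∃ γ : ℝ → E,
    ContinuousOn γ (Set.Icc 0 1) ∧ γ 0 = x ∧ γ 1 = y ∧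
    Set.MapsTo γ (Set.Icc 0 1) K ∧
    eVariationOn γ (Set.Icc 0 1) ≤ ENNReal.ofReal C * edist x y

set_option maxHeartbeats 1600000 in
/-- For the dihedral group `I₂(2)` with (adjusted) basic invariants
`(x² + y², x²y²)`, the image region `{(u,v) : 0 ≤ v ≤ u²/4, 0 ≤ u ≤ a²}`
under the parabola is Whitney 1-regular. -/
theorem stmt_13 (a : ℝ) (ha : 0 < a) :
    WhitneyOneRegular {z : EuclideanSpace ℝ (Fin 2) |
      0 ≤ z 0 ∧ 0 ≤ z 1 ∧ z 1 ≤ (z 0) ^ 2 / 4 ∧ z 0 ≤ a ^ 2} := by 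
  refine ⟨6, by norm_num, ?_⟩
  intro x hx y hy
  obtain ⟨hx0, hx1, hx2, hx3⟩ := hx
  obtain ⟨hy0, hy1, hy2, hy3⟩ := hy
  set L : ℝ := 3 * (|y 0 - x 0| + |y 1 - x 1|) with hL
  have hL0 : 0 ≤ L := by positivity
  have hlip : LipschitzWith (Real.toNNReal L) (pth x y) := by
    apply LipschitzWith.of_dist_le_mul
    intro s t
    refine (pth_dist_le x y s t).trans ?_
    exact mul_le_mul_of_nonneg_right (Real.le_coe_toNNReal L) dist_nonneg
  refine ⟨pth x y, hlip.continuous.continuousOn, ?_, ?_, ?_, ?_⟩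
  · ext i
    fin_cases i <;> simp [pth, pathU_zero, pathV_zero]
  · ext i
    fin_cases i <;> simp [pth, pathU_one, pathV_one]
  · intro t ht
    obtain ⟨ht0, ht1⟩ := ht
    have hq0 : pth x y t 0 = x 0 + (y 0 - x 0) * clmp (3*t - 1) := rfl
    have hq1 : pth x y t 1 = x 1 + (min (x 1) (y 1) - x 1) * clmp (3*t)
        + (y 1 - min (x 1) (y 1)) * clmp (3*t - 2) := rfl
    have hc1n := clmp_nonneg (3*t); have hc11 := clmp_le_one (3*t)
    have hc2n := clmp_nonneg (3*t - 1); have hc21 := clmp_le_one (3*t - 1)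
    have hc3n := clmp_nonneg (3*t - 2); have hc31 := clmp_le_one (3*t - 2)
    have hm0 : 0 ≤ min (x 1) (y 1) := le_min hx1 hy1
    have hmx : min (x 1) (y 1) ≤ x 1 := min_le_left _ _
    have hmy : min (x 1) (y 1) ≤ y 1 := min_le_right _ _
    refine ⟨?_, ?_, ?_, ?_⟩
    · rw [hq0]
      nlinarith [mul_nonneg hx0 (sub_nonneg.2 hc21), mul_nonneg hy0 hc2n]
    · rw [hq1]
      nlinarith [mul_nonneg hx1 (sub_nonneg.2 hc11), mul_nonneg hm0 hc1n,
        mul_nonneg (sub_nonneg.2 hmy) hc3n]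
    · rw [hq0, hq1]
      rcases le_or_gt t (1/3) with h13 | h13
      · rw [clmp_of_nonpos (by linarith : 3*t - 1 ≤ 0),
          clmp_of_nonpos (by linarith : 3*t - 2 ≤ 0)]
        nlinarith [mul_nonneg (sub_nonneg.2 hmx) hc1n, hx2]
      · rcases le_or_gt t (2/3) with h23 | h23
        · rw [clmp_of_one_le (by linarith : 1 ≤ 3*t),
            clmp_of_nonpos (by linarith : 3*t - 2 ≤ 0)]
          set z := x 0 + (y 0 - x 0) * clmp (3*t - 1) with hz
          rcases le_total (x 0) (y 0) with h | h
          · have h1 : x 0 ≤ z := by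
              rw [hz]; nlinarith [mul_nonneg (sub_nonneg.2 h) hc2n]
            have h2 : x 0 ^ 2 ≤ z ^ 2 := pow_le_pow_left₀ hx0 h1 2
            nlinarith [hx2, hmx]
          · have h1 : y 0 ≤ z := by
              rw [hz]; nlinarith [mul_nonneg (sub_nonneg.2 h) (sub_nonneg.2 hc21)]
            have h2 : y 0 ^ 2 ≤ z ^ 2 := pow_le_pow_left₀ hy0 h1 2
            nlinarith [hy2, hmy]
        · rw [clmp_of_one_le (by linarith : 1 ≤ 3*t),
            clmp_of_one_le (by linarith : 1 ≤ 3*t - 1)]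
          nlinarith [hy2, mul_nonneg (sub_nonneg.2 hmy) (sub_nonneg.2 hc31)]
    · rw [hq0]
      nlinarith [mul_nonneg (sub_nonneg.2 hx3) (sub_nonneg.2 hc21),
        mul_nonneg (sub_nonneg.2 hy3) hc2n]
  · have h1 : eVariationOn (pth x y) (Set.Icc 0 1)
        ≤ (Real.toNNReal L : ℝ≥0∞) * eVariationOn (id : ℝ → ℝ) (Set.Icc 0 1) := by
      have := LipschitzOnWith.comp_eVariationOn_le
        ((hlip.lipschitzOnWith : LipschitzOnWith _ _ (Set.Icc (0:ℝ) 1))) (Set.mapsTo_id (Set.Icc (0:ℝ) 1))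
      simpa [Function.comp] using this
    have hid : eVariationOn (id : ℝ → ℝ) (Set.Icc 0 1) ≤ 1 := by
      have hmono : MonotoneOn (id : ℝ → ℝ) (Set.Icc (0:ℝ) 1) := fun a _ b _ h => h
      have h2 := hmono.eVariationOn_le (Set.left_mem_Icc.2 zero_le_one)
        (Set.right_mem_Icc.2 zero_le_one)
      simpa using h2
    have hLd : L ≤ 6 * dist x y := by
      have ha0 : |y 0 - x 0| ≤ dist x y := by
        rw [dist_comm]; exact proj_abs_le_dist y x 0
      have ha1 : |y 1 - x 1| ≤ dist x y := by
        rw [dist_comm]; exact proj_abs_le_dist y x 1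
      rw [hL]; linarith
    calc eVariationOn (pth x y) (Set.Icc 0 1)
        ≤ (Real.toNNReal L : ℝ≥0∞) * 1 := by
          exact le_trans h1 (mul_le_mul_right hid _)
      _ = ENNReal.ofReal L := by rw [mul_one]; rfl
      _ ≤ ENNReal.ofReal (6 * dist x y) := ENNReal.ofReal_le_ofReal hLd
      _ = ENNReal.ofReal 6 * edist x y := by
          rw [ENNReal.ofReal_mul (by norm_num), edist_dist]
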